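/- Let b : ℕ → ℤ be defined by b(n) = ∑_{k=0}^{n} C(n,k)·2^k·Catalan(k). Then b satisfies the linear recurrence (n+1)·b(n) = (10n − 4)·b(n−1) + (9 − 9n)·b(n−2) for all n ≥ 2. -/

import Mathlib

lemma cast_choose_sub (n k : ℕ) :
    ((n : ℚ) + 1 - k) * ((n + 1).choose k) = ((n : ℚ) + 1) * (n.choose k) := by
  rcases le_or_gt k (n + 1) with h | h
  · have h0 := Nat.choose_mul_succ_eq n k
    have : ((n.choose k * (n + 1) : ℕ) : ℚ) = (((n + 1).choose k * (n + 1 - k) : ℕ) : ℚ) := by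
      exact_mod_cast congrArg (fun x : ℕ => (x : ℚ)) h0
    push_cast [Nat.cast_sub h] at this
    linarith
  · rw [Nat.choose_eq_zero_of_lt h, Nat.choose_eq_zero_of_lt (by omega)]
    simp

lemma cast_choose_succ_right (n k : ℕ) :
    ((k : ℚ) + 1) * (n.choose (k + 1)) = ((n : ℚ) - k) * (n.choose k) := by
  rcases le_or_gt k n with h | h
  · have h0 := Nat.choose_succ_right_eq n k
    have : ((n.choose (k + 1) * (k + 1) : ℕ) : ℚ) = ((n.choose k * (n - k) : ℕ) : ℚ) := by
      exact_mod_cast congrArg (fun x : ℕ => (x : ℚ)) h0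
    push_cast [Nat.cast_sub h] at this
    linarith
  · rw [Nat.choose_eq_zero_of_lt h, Nat.choose_eq_zero_of_lt (by omega)]
    simp

lemma cast_central (k : ℕ) :
    ((k : ℚ) + 1) * ((2 * (k + 1)).choose (k + 1)) = 2 * (2 * k + 1) * ((2 * k).choose k) := by
  have h0 := Nat.succ_mul_centralBinom_succ k
  simp only [Nat.centralBinom] at h0
  exact_mod_cast h0

/-- The WZ-style certificate function -/
noncomputable def gg (m k : ℕ) : ℚ := k * ((m + 2).choose k) * 2 ^ k * ((2 * k).choose k)

/-- termwise identity -/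
lemma key_term (m k : ℕ) :
    ((m : ℚ) + 2) * (((m : ℚ) + 3) * (((m + 2).choose k : ℚ) * 2 ^ k * (((2 * k).choose k : ℚ) / (k + 1)))
      - (10 * m + 16) * (((m + 1).choose k : ℚ) * 2 ^ k * (((2 * k).choose k : ℚ) / (k + 1)))
      + (9 * m + 9) * ((m.choose k : ℚ) * 2 ^ k * (((2 * k).choose k : ℚ) / (k + 1))))
    = gg m k - gg m (k + 1) := by
  have hN1 : (m : ℚ) + 1 ≠ 0 := by positivity
  have hN2 : (m : ℚ) + 2 ≠ 0 := by positivity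
  have hK : (k : ℚ) + 1 ≠ 0 := by positivity
  have h1 := cast_choose_sub (m + 1) k
  have h2 := cast_choose_sub m k
  have h3 := cast_choose_succ_right (m + 2) k
  have h4 := cast_central k
  push_cast at h1 h2 h3 ⊢
  have hB : (((m + 1).choose k : ℚ)) = ((m : ℚ) + 2 - k) * ((m + 2).choose k) / ((m : ℚ) + 2) := by
    rw [eq_div_iff hN2]; linarith
  have hD : ((m.choose k : ℚ)) = ((m : ℚ) + 1 - k) * ((m + 1).choose k) / ((m : ℚ) + 1) := by
    rw [eq_div_iff hN1]; linarith
  have hA' : (((m + 2).choose (k + 1) : ℚ)) = ((m : ℚ) + 2 - k) * ((m + 2).choose k) / ((k : ℚ) + 1) := by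
    rw [eq_div_iff hK]; push_cast; linarith
  have hC' : (((2 * (k + 1)).choose (k + 1) : ℚ)) = 2 * (2 * k + 1) * ((2 * k).choose k) / ((k : ℚ) + 1) := by
    rw [eq_div_iff hK]; linarith
  rw [gg, gg]
  push_cast
  rw [hB, hD, hA', hC', hB]
  field_simp
  ring

theorem stmt_9 (b : ℕ → ℤ)
    (hb : ∀ n, (b n : ℚ) = ∑ k ∈ Finset.range (n + 1),
      (n.choose k : ℚ) * 2^k * (((2*k).choose k : ℚ) / (k + 1))) :
    ∀ n : ℕ, 2 ≤ n →
      ((n : ℤ) + 1) * b n = (10 * n - 4) * b (n - 1) + (9 - 9 * n) * b (n - 2) := by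
  intro n hn
  obtain ⟨m, rfl⟩ : ∃ m, n = m + 2 := ⟨n - 2, by omega⟩
  have h1 : m + 2 - 1 = m + 1 := rfl
  have h2 : m + 2 - 2 = m := rfl
  rw [h1, h2]
  -- extend sums to range (m+3)
  set T : ℕ → ℕ → ℚ := fun j k =>
    (j.choose k : ℚ) * 2 ^ k * (((2 * k).choose k : ℚ) / (k + 1)) with hT
  have e1 : (b (m + 1) : ℚ) = ∑ k ∈ Finset.range (m + 3), T (m + 1) k := by
    rw [hb (m + 1), Finset.sum_range_succ (f := T (m + 1)) (n := m + 2)]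
    have : T (m + 1) (m + 2) = 0 := by
      simp [hT, Nat.choose_eq_zero_of_lt (by omega : m + 1 < m + 2)]
    rw [this, add_zero]
  have e0 : (b m : ℚ) = ∑ k ∈ Finset.range (m + 3), T m k := by
    rw [hb m, Finset.sum_range_succ (f := T m) (n := m + 2),
      Finset.sum_range_succ (f := T m) (n := m + 1)]
    have z1 : T m (m + 1) = 0 := by
      simp [hT, Nat.choose_eq_zero_of_lt (by omega : m < m + 1)]
    have z2 : T m (m + 2) = 0 := by
      simp [hT, Nat.choose_eq_zero_of_lt (by omega : m < m + 2)]
    rw [z1, z2, add_zero, add_zero]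
  have e2 : (b (m + 2) : ℚ) = ∑ k ∈ Finset.range (m + 3), T (m + 2) k := hb (m + 2)
  have hN2 : (m : ℚ) + 2 ≠ 0 := by positivity
  have key : ((m : ℚ) + 3) * (b (m + 2) : ℚ)
      - (10 * m + 16) * (b (m + 1) : ℚ) + (9 * m + 9) * (b m : ℚ) = 0 := by
    rw [e0, e1, e2, Finset.mul_sum, Finset.mul_sum, Finset.mul_sum,
      ← Finset.sum_sub_distrib, ← Finset.sum_add_distrib]
    apply mul_left_cancel₀ hN2
    rw [Finset.mul_sum, mul_zero]
    have congrsum : ∀ k ∈ Finset.range (m + 3),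
        ((m : ℚ) + 2) * (((m : ℚ) + 3) * T (m + 2) k - (10 * m + 16) * T (m + 1) k
          + (9 * m + 9) * T m k) = gg m k - gg m (k + 1) := fun k _ => key_term m k
    rw [Finset.sum_congr rfl congrsum, Finset.sum_range_sub' (gg m) (m + 3)]
    have g0 : gg m 0 = 0 := by simp [gg]
    have gend : gg m (m + 3) = 0 := by
      simp [gg, Nat.choose_eq_zero_of_lt (by omega : m + 2 < m + 3)]
    rw [g0, gend, sub_zero]
  have keyZ : ((m : ℤ) + 3) * b (m + 2)
      - (10 * m + 16) * b (m + 1) + (9 * m + 9) * b m = 0 := by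
    exact_mod_cast key
  push_cast
  linarith
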